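/- Let N ≥ 1 and let Ω ⊆ EuclideanSpace ℝ (Fin N) be open. There is a constant c > 0 depending only on N with the following property: if v : EuclideanSpace ℝ (Fin N) → ℝ is C² on Ω with v(x) < 0 and Δv(x) ≥ 0 for every x ∈ Ω, and if z ∈ Ω and r > 0 are such that the closed ball of center z and radius r is contained in Ω, then ∫_{Metric.ball z (r/2)} |∇v(x)|²/v(x)² dx ≤ c·r^(N-2). -/

import Mathlib

open MeasureTheory Metric Set Filter

/-- The Laplacian `Δu(x) = ∑ i, ∂²u/∂xᵢ²(x)` of `u : ℝ^N → ℝ`. -/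
noncomputable def lap {N : ℕ} (u : EuclideanSpace ℝ (Fin N) → ℝ)
    (x : EuclideanSpace ℝ (Fin N)) : ℝ :=
  ∑ i : Fin N, fderiv ℝ (fun y => fderiv ℝ u y (EuclideanSpace.single i 1)) x
    (EuclideanSpace.single i 1)

lemma glue_aux {E : Type*} [NormedAddCommGroup E] [NormedSpace ℝ E] {f : E → ℝ}
    {s t : Set E} (hs : IsOpen s) (ht : IsOpen t) (hcov : ∀ x, x ∈ s ∨ x ∈ t)
    (hf : ContDiffOn ℝ 1 f s) (h0 : ∀ x ∈ t, f x = 0) :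
    Differentiable ℝ f ∧ Continuous (fderiv ℝ f) ∧ ∀ x ∈ t, fderiv ℝ f x = 0 := by
  have hz : ∀ x ∈ t, HasFDerivAt f (0 : E →L[ℝ] ℝ) x := by
    intro x hx
    have hev : f =ᶠ[nhds x] fun _ => (0 : ℝ) :=
      eventually_of_mem (ht.mem_nhds hx) (fun y hy => h0 y hy)
    exact (hasFDerivAt_const (0 : ℝ) x).congr_of_eventuallyEq hev
  have hdiff : Differentiable ℝ f := by
    intro x
    rcases hcov x with hx | hx
    · exact (hf.contDiffAt (hs.mem_nhds hx)).differentiableAt (by norm_num)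
    · exact (hz x hx).differentiableAt
  have hfd0 : ∀ x ∈ t, fderiv ℝ f x = 0 := fun x hx => (hz x hx).fderiv
  refine ⟨hdiff, ?_, hfd0⟩
  rw [continuous_iff_continuousAt]
  intro x
  rcases hcov x with hx | hx
  · exact (hf.continuousOn_fderiv_of_isOpen hs le_rfl).continuousAt (hs.mem_nhds hx)
  · have hev : fderiv ℝ f =ᶠ[nhds x] fun _ => (0 : E →L[ℝ] ℝ) :=
      eventually_of_mem (ht.mem_nhds hx) (fun y hy => hfd0 y hy)
    exact ContinuousAt.congr continuousAt_const hev.symm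

set_option maxHeartbeats 8000000 in
/-- local logarithmic gradient estimate for negative subharmonic
functions. There is `c = c(N) > 0` such that for every open `Ω`, every `v` which
is `C²` on `Ω` with `v < 0` and `Δv ≥ 0` in `Ω`, and every closed ball
`closedBall z r ⊆ Ω`, one has `∫_{B(z,r/2)} |∇v|²/v² ≤ c r^{N-2}`. -/
theorem stmt_5 (N : ℕ) (hN : 1 ≤ N) :
    ∃ c : ℝ, 0 < c ∧
      ∀ (Ω : Set (EuclideanSpace ℝ (Fin N))), IsOpen Ω →
        ∀ v : EuclideanSpace ℝ (Fin N) → ℝ, ContDiffOn ℝ 2 v Ω →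
          (∀ x ∈ Ω, v x < 0) → (∀ x ∈ Ω, 0 ≤ lap v x) →
          ∀ (z : EuclideanSpace ℝ (Fin N)) (r : ℝ), 0 < r →
            Metric.closedBall z r ⊆ Ω →
            ∫ x in Metric.ball z (r / 2), ‖gradient v x‖ ^ 2 / (v x) ^ 2 ≤
              c * r ^ ((N : ℝ) - 2) := by
  classical
  set EE := EuclideanSpace ℝ (Fin N)
  -- fixed bump functions at the origin
  let ψ : ContDiffBump (0 : EE) :=
    { rIn := 1/2, rOut := 3/4, rIn_pos := by norm_num, rIn_lt_rOut := by norm_num }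
  let η₀ : ContDiffBump (0 : EE) :=
    { rIn := 7/8, rOut := 1, rIn_pos := by norm_num, rIn_lt_rOut := by norm_num }
  obtain ⟨K, hK⟩ : ∃ K, ∀ x, ‖fderiv ℝ ψ x‖ ≤ K :=
    (ψ.hasCompactSupport.fderiv ℝ).exists_bound_of_continuous
      ((ψ.contDiff (n := 1)).continuous_fderiv (by norm_num))
  have hK0 : 0 ≤ K := le_trans (norm_nonneg _) (hK 0)
  set B₁ : ℝ := (volume (closedBall (0 : EE) 1)).toReal with hB₁
  have hB₁0 : 0 ≤ B₁ := ENNReal.toReal_nonneg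
  refine ⟨4 * N * K ^ 2 * B₁ + 1, by positivity, ?_⟩
  intro Ω hΩ v hv hneg hsub z r hr hball
  set e : Fin N → EE := fun i => EuclideanSpace.single i 1 with he
  have henorm : ∀ i, ‖e i‖ = 1 := fun i => by
    rw [he]; rw [EuclideanSpace.norm_single]; exact norm_one
  -- the rescaled cutoffs
  set T : EE → EE := fun x => r⁻¹ • (x - z) with hTdef
  have hTnorm : ∀ x, ‖T x‖ = dist x z / r := by
    intro x
    rw [hTdef]
    simp only [norm_smul, norm_inv, Real.norm_eq_abs, abs_of_pos hr, dist_eq_norm]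
    rw [div_eq_inv_mul]
    exact congrArg _ (dist_eq_norm x z).symm
  have hT : ∀ x, HasFDerivAt T (r⁻¹ • ContinuousLinearMap.id ℝ EE) x := by
    intro x
    exact ((hasFDerivAt_id x).sub_const z).const_smul r⁻¹
  set ζ : EE → ℝ := fun x => ψ (T x) with hζdef
  set η : EE → ℝ := fun x => η₀ (T x) with hηdef
  set ζ' : EE → (EE →L[ℝ] ℝ) :=
    fun x => (fderiv ℝ ψ (T x)).comp (r⁻¹ • ContinuousLinearMap.id ℝ EE) with hζ'def
  have hζat : ∀ x, HasFDerivAt ζ (ζ' x) x := by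
    intro x
    exact ((ψ.contDiff (n := 1)).differentiable (by norm_num) (T x)).hasFDerivAt.comp x (hT x)
  have hζ'bound : ∀ x i, |ζ' x (e i)| ≤ K * r⁻¹ := by
    intro x i
    have : ζ' x (e i) = fderiv ℝ ψ (T x) (r⁻¹ • e i) := by simp [hζ'def]
    rw [this, ← Real.norm_eq_abs]
    calc ‖fderiv ℝ ψ (T x) (r⁻¹ • e i)‖ ≤ ‖fderiv ℝ ψ (T x)‖ * ‖r⁻¹ • e i‖ :=
          (fderiv ℝ ψ (T x)).le_opNorm _
      _ ≤ K * (r⁻¹ * 1) := by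
          rw [norm_smul, norm_inv, Real.norm_eq_abs, abs_of_pos hr, henorm i]
          exact mul_le_mul (hK _) le_rfl (by positivity) hK0
      _ = K * r⁻¹ := by ring
  have hψIn : ψ.rIn = 1/2 := rfl
  have hψOut : ψ.rOut = 3/4 := rfl
  have hηIn : η₀.rIn = 7/8 := rfl
  have hηOut : η₀.rOut = 1 := rfl
  have hζ1 : ∀ x, dist x z ≤ r / 2 → ζ x = 1 := by
    intro x hx
    apply ψ.one_of_mem_closedBall
    rw [mem_closedBall, dist_zero_right, hTnorm, hψIn, div_le_div_iff₀ hr (by norm_num : (0:ℝ) < 2)]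
    linarith
  have hζ0 : ∀ x, ¬ dist x z ≤ 3/4 * r → ζ x = 0 := by
    intro x hx
    apply ψ.zero_of_le_dist
    rw [dist_zero_right, hTnorm, hψOut, le_div_iff₀ hr]
    nlinarith [not_le.1 hx]
  have hζ'0 : ∀ x, ¬ dist x z ≤ 3/4 * r → ζ' x = 0 := by
    intro x hx
    have h1 : fderiv ℝ ψ (T x) = 0 := by
      have hmem : T x ∉ tsupport (ψ : EE → ℝ) := by
        rw [ψ.tsupport_eq, hψOut]
        intro hmem
        rw [mem_closedBall, dist_zero_right, hTnorm, div_le_iff₀ hr] at hmem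
        exact hx (by nlinarith)
      by_contra h
      exact hmem (support_fderiv_subset ℝ (f := (ψ : EE → ℝ)) h)
    rw [hζ'def]
    simp [h1]
  have hη1 : ∀ x, dist x z ≤ 7/8 * r → η x = 1 := by
    intro x hx
    apply η₀.one_of_mem_closedBall
    rw [mem_closedBall, dist_zero_right, hTnorm, hηIn, div_le_iff₀ hr]
    nlinarith
  have hη0 : ∀ x, ¬ dist x z ≤ r → η x = 0 := by
    intro x hx
    apply η₀.zero_of_le_dist
    rw [dist_zero_right, hTnorm, hηOut, le_div_iff₀ hr]
    nlinarith [not_le.1 hx]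
  -- basic set inclusions
  have hsub34 : ∀ x : EE, dist x z ≤ 3/4 * r → x ∈ Ω := fun x hx =>
    hball (by rw [mem_closedBall]; nlinarith)
  have hsubA : ∀ x : EE, dist x z ≤ 7/8 * r → x ∈ Ω := fun x hx =>
    hball (by rw [mem_closedBall]; nlinarith)
  set A : Set EE := ball z (7/8 * r) with hAdef
  have hAopen : IsOpen A := isOpen_ball
  have hAΩ : A ⊆ Ω := fun x hx => hsubA x (le_of_lt (mem_ball.1 hx))
  set tA : Set EE := (closedBall z (3/4 * r))ᶜ with htAdef
  have htAopen : IsOpen tA := isOpen_compl_iff.2 Metric.isClosed_closedBall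
  have hcovA : ∀ x : EE, x ∈ A ∨ x ∈ tA := by
    intro x
    by_cases h : dist x z ≤ 3/4 * r
    · left; rw [hAdef, mem_ball]; nlinarith
    · right; rw [htAdef, mem_compl_iff, mem_closedBall]; exact h
  have htA34 : ∀ x : EE, x ∈ tA → ¬ dist x z ≤ 3/4 * r := by
    intro x hx
    rw [htAdef, mem_compl_iff, mem_closedBall] at hx
    exact hx
  set tG : Set EE := (closedBall z r)ᶜ with htGdef
  have htGopen : IsOpen tG := isOpen_compl_iff.2 Metric.isClosed_closedBall
  have hcovG : ∀ x : EE, x ∈ Ω ∨ x ∈ tG := by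
    intro x
    by_cases h : x ∈ closedBall z r
    · left; exact hball h
    · right; exact h
  -- the main auxiliary functions
  set u : EE → ℝ := fun x => (-(v x))⁻¹ with hudef
  set d : Fin N → EE → ℝ := fun i x => fderiv ℝ v x (e i) with hddef
  set g : Fin N → EE → ℝ := fun i x => η x * d i x with hgdef
  set φ : EE → ℝ := fun x => ζ x * ζ x * u x with hφdef
  set q : Fin N → EE → ℝ := fun i x => ζ x * d i x * u x with hqdef
  set P : EE → ℝ := fun x => ∑ i, q i x ^ 2 with hPdef
  set G : EE → ℝ := fun x => ∑ i, (ζ' x (e i)) ^ 2 with hGdef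
  -- smoothness facts
  have hζC1 : ContDiff ℝ 1 ζ := by
    apply (ψ.contDiff (n := 1)).comp
    exact (contDiff_id.sub contDiff_const).const_smul r⁻¹
  have hηC1 : ContDiff ℝ 1 η := by
    apply (η₀.contDiff (n := 1)).comp
    exact (contDiff_id.sub contDiff_const).const_smul r⁻¹
  have hvd : ContDiffOn ℝ 1 (fun y => fderiv ℝ v y) Ω :=
    hv.fderiv_of_isOpen hΩ (by norm_num)
  have hdC1 : ∀ i, ContDiffOn ℝ 1 (d i) Ω := fun i =>
    (ContinuousLinearMap.apply ℝ ℝ (e i)).contDiff.comp_contDiffOn hvd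
  have hvne : ∀ x ∈ Ω, -(v x) ≠ 0 := fun x hx => (neg_pos.mpr (hneg x hx)).ne'
  have huC1 : ContDiffOn ℝ 1 u Ω := ((hv.of_le (by norm_num)).neg).inv hvne
  have hvdiffat : ∀ x ∈ Ω, DifferentiableAt ℝ v x := fun x hx =>
    ((hv.of_le one_le_two).differentiableOn (by norm_num)).differentiableAt
      (hΩ.mem_nhds hx)
  have hφ0 : ∀ x, ¬ dist x z ≤ 3/4 * r → φ x = 0 := by
    intro x hx; show ζ x * ζ x * u x = 0; rw [hζ0 x hx]; ring
  have hq0 : ∀ i, ∀ x, ¬ dist x z ≤ 3/4 * r → q i x = 0 := by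
    intro i x hx; show ζ x * d i x * u x = 0; rw [hζ0 x hx]; ring
  -- glue: global regularity of φ, g i, q i
  obtain ⟨hφdiff, hφfdcont, hφfd0⟩ :=
    glue_aux (f := φ) hAopen htAopen hcovA
      ((hζC1.contDiffOn.mul hζC1.contDiffOn).mul (huC1.mono hAΩ))
      (fun x hx => hφ0 x (htA34 x hx))
  have hgglue : ∀ i, Differentiable ℝ (g i) ∧ Continuous (fderiv ℝ (g i)) ∧
      ∀ x ∈ tG, fderiv ℝ (g i) x = 0 := fun i =>
    glue_aux (f := g i) hΩ htGopen hcovG (hηC1.contDiffOn.mul (hdC1 i))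
      (fun x hx => by
        show η x * d i x = 0
        rw [hη0 x (by rw [htGdef, mem_compl_iff, mem_closedBall] at hx; exact hx)]
        ring)
  have hgdiff : ∀ i, Differentiable ℝ (g i) := fun i => (hgglue i).1
  have hgfdcont : ∀ i, Continuous (fderiv ℝ (g i)) := fun i => (hgglue i).2.1
  have hqdiff : ∀ i, Differentiable ℝ (q i) := fun i =>
    (glue_aux (f := q i) hAopen htAopen hcovA
      ((hζC1.contDiffOn.mul ((hdC1 i).mono hAΩ)).mul (huC1.mono hAΩ))
      (fun x hx => hq0 i x (htA34 x hx))).1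
  -- continuity of ζ'
  have hTcont : Continuous T := by
    rw [hTdef]; exact (continuous_id.sub continuous_const).const_smul r⁻¹
  have hζ'cont : Continuous ζ' := by
    rw [hζ'def]
    exact (((ψ.contDiff (n := 1)).continuous_fderiv (by norm_num)).comp hTcont).clm_comp
      continuous_const
  -- compact support helper
  have hcsupp : ∀ (f : EE → ℝ), (∀ x, ¬ dist x z ≤ 3/4 * r → f x = 0) →
      HasCompactSupport f := fun f h =>
    HasCompactSupport.intro (isCompact_closedBall z (3/4 * r))
      (fun x hx => h x (by rwa [mem_closedBall] at hx))
  -- integrability of all the integrands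
  have hI1 : ∀ i, Integrable (fun x => φ x * fderiv ℝ (g i) x (e i)) := by
    intro i
    apply Continuous.integrable_of_hasCompactSupport
    · exact (hφdiff.continuous).mul
        (((ContinuousLinearMap.apply ℝ ℝ (e i)).continuous).comp (hgfdcont i))
    · exact hcsupp _ (fun x hx => by rw [hφ0 x hx]; ring)
  have hI2 : ∀ i, Integrable (fun x => fderiv ℝ φ x (e i) * g i x) := by
    intro i
    apply Continuous.integrable_of_hasCompactSupport
    · exact (((ContinuousLinearMap.apply ℝ ℝ (e i)).continuous).comp hφfdcont).mul
        ((hgdiff i).continuous)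
    · refine hcsupp _ (fun x hx => ?_)
      have : fderiv ℝ φ x = 0 := hφfd0 x (by rw [htAdef, mem_compl_iff, mem_closedBall]; exact hx)
      rw [this]
      simp
  have hI3 : ∀ i, Integrable (fun x => φ x * g i x) := by
    intro i
    apply Continuous.integrable_of_hasCompactSupport
    · exact (hφdiff.continuous).mul ((hgdiff i).continuous)
    · exact hcsupp _ (fun x hx => by rw [hφ0 x hx]; ring)
  have hIP : Integrable P := by
    apply Continuous.integrable_of_hasCompactSupport
    · rw [hPdef]
      exact continuous_finset_sum _ (fun i _ => ((hqdiff i).continuous).pow 2)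
    · refine hcsupp _ (fun x hx => ?_)
      show (∑ i, q i x ^ 2) = 0
      exact Finset.sum_eq_zero (fun i _ => by rw [hq0 i x hx]; ring)
  have hGcont : Continuous G := by
    rw [hGdef]
    exact continuous_finset_sum _ (fun i _ =>
      ((((ContinuousLinearMap.apply ℝ ℝ (e i)).continuous).comp hζ'cont).pow 2))
  have hIG : Integrable G := by
    apply Continuous.integrable_of_hasCompactSupport hGcont
    · refine hcsupp _ (fun x hx => ?_)
      show (∑ i, (ζ' x) (e i) ^ 2) = 0
      refine Finset.sum_eq_zero (fun i _ => ?_)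
      rw [hζ'0 x hx]
      simp
  -- integration by parts
  have hIBP : ∀ i, ∫ x, φ x * fderiv ℝ (g i) x (e i) = - ∫ x, fderiv ℝ φ x (e i) * g i x :=
    fun i => integral_mul_fderiv_eq_neg_fderiv_mul_of_integrable
      (hI2 i) (hI1 i) (hI3 i) (fun x _ => hφdiff x) (fun x _ => hgdiff i x)
  have hu2 : ∀ x, (v x ^ 2)⁻¹ = u x * u x := by
    intro x
    show _ = (-(v x))⁻¹ * (-(v x))⁻¹
    rw [← mul_inv]
    congr 1
    ring
  -- pointwise claim A : the integrand ∑ᵢ φ ∂ᵢ(gᵢ) is nonnegative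
  have hA : ∀ x, 0 ≤ ∑ i, φ x * fderiv ℝ (g i) x (e i) := by
    intro x
    by_cases hx : ζ x = 0
    · have h0 : φ x = 0 := by show ζ x * ζ x * u x = 0; rw [hx]; ring
      apply le_of_eq
      exact (Finset.sum_eq_zero (fun i _ => by rw [h0]; ring)).symm
    · have hxball : dist x z < 3/4 * r := by
        by_contra h
        apply hx
        apply ψ.zero_of_le_dist
        rw [dist_zero_right, hTnorm, hψOut, le_div_iff₀ hr]
        nlinarith [not_lt.1 h]
      have hxΩ : x ∈ Ω := hsub34 x hxball.le
      have hfd : ∀ i, fderiv ℝ (g i) x (e i) = fderiv ℝ (d i) x (e i) := by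
        intro i
        apply congrFun (congrArg _ ?_)
        apply Filter.EventuallyEq.fderiv_eq
        apply eventually_of_mem (hAopen.mem_nhds (by rw [hAdef, mem_ball]; nlinarith))
        intro y hy
        show η y * d i y = d i y
        rw [hη1 y (le_of_lt (by rw [hAdef, mem_ball] at hy; exact hy))]
        ring
      have hlap : ∑ i, fderiv ℝ (d i) x (e i) = lap v x := rfl
      have hsum : ∑ i, φ x * fderiv ℝ (g i) x (e i) = φ x * lap v x := by
        rw [← hlap, Finset.mul_sum]
        exact Finset.sum_congr rfl (fun i _ => by rw [hfd i])
      rw [hsum]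
      have hφnn : 0 ≤ φ x := by
        show 0 ≤ ζ x * ζ x * u x
        apply mul_nonneg (mul_self_nonneg _)
        show 0 ≤ (-(v x))⁻¹
        have h := (hneg x hxΩ).le
        exact inv_nonneg.2 (by linarith)
      exact mul_nonneg hφnn (hsub x hxΩ)
  -- pointwise claim B
  have hB : ∀ x, 1/2 * P x - 2 * G x ≤ ∑ i, fderiv ℝ φ x (e i) * g i x := by
    intro x
    by_cases hx : dist x z ≤ 3/4 * r
    · have hxΩ : x ∈ Ω := hsub34 x hx
      have hinv : HasFDerivAt u ((v x ^ 2)⁻¹ • fderiv ℝ v x) x := by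
        have h1 := (hasFDerivAt_inv (hvne x hxΩ)).comp x ((hvdiffat x hxΩ).hasFDerivAt.neg)
        refine h1.congr_fderiv ?_
        ext w
        simp only [ContinuousLinearMap.coe_comp', Function.comp_apply,
          ContinuousLinearMap.neg_apply, ContinuousLinearMap.smulRight_apply,
          ContinuousLinearMap.one_apply, ContinuousLinearMap.coe_smul', Pi.smul_apply,
          smul_eq_mul, neg_sq, ContinuousLinearMap.toSpanSingleton_apply]
        ring
      have hφat : HasFDerivAt φ
          ((ζ x * ζ x) • ((v x ^ 2)⁻¹ • fderiv ℝ v x) + u x • (ζ x • ζ' x + ζ x • ζ' x)) x :=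
        ((hζat x).mul (hζat x)).mul hinv
      have hfdφ : ∀ i, fderiv ℝ φ x (e i) =
          (ζ x * ζ x) * ((v x ^ 2)⁻¹ * d i x) + u x * (ζ x * ζ' x (e i) + ζ x * ζ' x (e i)) := by
        intro i
        rw [hφat.fderiv]
        show _ = ζ x * ζ x * ((v x ^ 2)⁻¹ * fderiv ℝ v x (e i)) + _
        simp only [ContinuousLinearMap.add_apply, ContinuousLinearMap.coe_smul',
          Pi.smul_apply, smul_eq_mul]
      have hη1x : η x = 1 := hη1 x (by nlinarith)
      have hterm : ∀ i, fderiv ℝ φ x (e i) * g i x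
          = q i x ^ 2 + 2 * q i x * ζ' x (e i) := by
        intro i
        show fderiv ℝ φ x (e i) * (η x * d i x)
          = (ζ x * d i x * u x) ^ 2 + 2 * (ζ x * d i x * u x) * ζ' x (e i)
        rw [hfdφ i, hη1x, hu2 x]
        ring
      have hsplit : 1/2 * P x - 2 * G x = ∑ i, (1/2 * q i x ^ 2 - 2 * ζ' x (e i) ^ 2) := by
        show 1/2 * (∑ i, q i x ^ 2) - 2 * (∑ i, ζ' x (e i) ^ 2) = _
        rw [Finset.mul_sum, Finset.mul_sum, ← Finset.sum_sub_distrib]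
      rw [hsplit]
      refine Finset.sum_le_sum (fun i _ => ?_)
      rw [hterm i]
      nlinarith [sq_nonneg (q i x + 2 * ζ' x (e i))]
    · have h1 : fderiv ℝ φ x = 0 :=
        hφfd0 x (by rw [htAdef, mem_compl_iff, mem_closedBall]; exact hx)
      have hPx : P x = 0 := by
        show (∑ i, q i x ^ 2) = 0
        exact Finset.sum_eq_zero (fun i _ => by rw [hq0 i x hx]; ring)
      have hGx : 0 ≤ G x := by
        show 0 ≤ ∑ i, ζ' x (e i) ^ 2
        exact Finset.sum_nonneg (fun i _ => sq_nonneg _)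
      have hz : ∑ i, fderiv ℝ φ x (e i) * g i x = 0 :=
        Finset.sum_eq_zero (fun i _ => by rw [h1]; simp)
      rw [hz, hPx]
      linarith
  -- the Caccioppoli-type inequality ∫ P ≤ 4 ∫ G
  have key : ∫ x, P x ≤ 4 * ∫ x, G x := by
    have hS : ∑ i, ∫ x, fderiv ℝ φ x (e i) * g i x ≤ 0 := by
      have h1 : 0 ≤ ∫ x, ∑ i, φ x * fderiv ℝ (g i) x (e i) := integral_nonneg hA
      rw [integral_finset_sum _ (fun i _ => hI1 i)] at h1
      have h2 : ∑ i, ∫ x, φ x * fderiv ℝ (g i) x (e i)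
          = - ∑ i, ∫ x, fderiv ℝ φ x (e i) * g i x := by
        rw [← Finset.sum_neg_distrib]
        exact Finset.sum_congr rfl (fun i _ => hIBP i)
      rw [h2] at h1
      linarith
    have h3 : ∫ x, (1/2 * P x - 2 * G x) ≤ ∑ i, ∫ x, fderiv ℝ φ x (e i) * g i x := by
      rw [← integral_finset_sum _ (fun i _ => hI2 i)]
      exact integral_mono ((hIP.const_mul _).sub (hIG.const_mul _))
        (integrable_finset_sum _ (fun i _ => hI2 i)) hB
    rw [integral_sub (hIP.const_mul _) (hIG.const_mul _),
      integral_const_mul, integral_const_mul] at h3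
    linarith
  -- bound on ∫ G
  have hG0 : ∀ x, x ∉ closedBall z r → G x = 0 := by
    intro x hx
    rw [mem_closedBall] at hx
    show (∑ i, ζ' x (e i) ^ 2) = 0
    refine Finset.sum_eq_zero (fun i _ => ?_)
    have h34 : ¬ dist x z ≤ 3/4 * r := fun h => hx (by linarith)
    rw [hζ'0 x h34]
    simp
  have hGbound : ∫ x, G x ≤ (N * (K * r⁻¹) ^ 2) * (volume (closedBall z r)).toReal := by
    rw [← setIntegral_eq_integral_of_forall_compl_eq_zero hG0]
    have hb : ∀ x ∈ closedBall z r, ‖G x‖ ≤ N * (K * r⁻¹) ^ 2 := by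
      intro x _
      have hGx : 0 ≤ G x := Finset.sum_nonneg (fun i _ => sq_nonneg _)
      rw [Real.norm_eq_abs, abs_of_nonneg hGx]
      show (∑ i, ζ' x (e i) ^ 2) ≤ _
      calc (∑ i, ζ' x (e i) ^ 2) ≤ ∑ _i : Fin N, (K * r⁻¹) ^ 2 := by
            refine Finset.sum_le_sum (fun i _ => ?_)
            have h := hζ'bound x i
            have h' := abs_le.1 h
            nlinarith [h'.1, h'.2]
        _ = N * (K * r⁻¹) ^ 2 := by
            rw [Finset.sum_const, Finset.card_univ, Fintype.card_fin, nsmul_eq_mul]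
    calc ∫ x in closedBall z r, G x ≤ ‖∫ x in closedBall z r, G x‖ := le_abs_self _
      _ ≤ (N * (K * r⁻¹) ^ 2) * (volume (closedBall z r)).toReal :=
        norm_setIntegral_le_of_norm_le_const measure_closedBall_lt_top hb
  have hvol : (volume (closedBall z r)).toReal = r ^ N * B₁ := by
    rw [Measure.addHaar_closedBall' volume z hr.le, ENNReal.toReal_mul,
      ENNReal.toReal_ofReal (by positivity), finrank_euclideanSpace_fin]
  -- the left-hand side
  have hpoint : EqOn (fun x => ‖gradient v x‖ ^ 2 / v x ^ 2) P (ball z (r/2)) := by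
    intro x hx
    rw [mem_ball] at hx
    have hxΩ : x ∈ Ω := hsub34 x (by nlinarith)
    have hζx : ζ x = 1 := hζ1 x (by linarith)
    have hgrad : ∀ j, gradient v x j = d j x := by
      intro j
      have h := InnerProductSpace.toDual_symm_apply
        (𝕜 := ℝ) (E := EE) (y := fderiv ℝ v x) (x := e j)
      have h2 : inner ℝ (gradient v x) (e j) = (gradient v x) j := by
        rw [he]
        rw [EuclideanSpace.inner_single_right]
        simp
      rw [← h2]
      exact h
    have hnorm : ‖gradient v x‖ ^ 2 = ∑ j, d j x ^ 2 := by
      rw [EuclideanSpace.norm_eq]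
      rw [Real.sq_sqrt (Finset.sum_nonneg (fun j _ => sq_nonneg _))]
      exact Finset.sum_congr rfl (fun j _ => by rw [Real.norm_eq_abs, sq_abs, hgrad j])
    show ‖gradient v x‖ ^ 2 / v x ^ 2 = P x
    rw [hnorm, div_eq_mul_inv, hu2 x]
    show _ = ∑ i, (ζ x * d i x * u x)^2
    rw [Finset.sum_mul]
    exact Finset.sum_congr rfl (fun j _ => by rw [hζx]; ring)
  have hstep1 : ∫ x in ball z (r/2), ‖gradient v x‖ ^ 2 / v x ^ 2
      = ∫ x in ball z (r/2), P x :=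
    setIntegral_congr_fun measurableSet_ball hpoint
  have hstep2 : ∫ x in ball z (r/2), P x ≤ ∫ x, P x :=
    setIntegral_le_integral hIP (ae_of_all _ (fun x =>
      Finset.sum_nonneg (fun i _ => sq_nonneg _)))
  -- final assembly
  have hrpow : r ^ ((N:ℝ) - 2) = r ^ N * (r⁻¹) ^ 2 := by
    rw [Real.rpow_sub hr, Real.rpow_natCast,
      show (2:ℝ) = ((2:ℕ):ℝ) by norm_num, Real.rpow_natCast]
    field_simp
  have hfinal : (4:ℝ) * ((N * (K * r⁻¹) ^ 2) * (r ^ N * B₁))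
      ≤ (4 * N * K ^ 2 * B₁ + 1) * r ^ ((N:ℝ) - 2) := by
    rw [hrpow]
    have hpos : (0:ℝ) < r ^ N * (r⁻¹) ^ 2 := by positivity
    have heq : (4:ℝ) * ((N * (K * r⁻¹) ^ 2) * (r ^ N * B₁))
        = (4 * N * K ^ 2 * B₁) * (r ^ N * (r⁻¹) ^ 2) := by ring
    rw [heq]
    apply mul_le_mul_of_nonneg_right _ hpos.le
    linarith
  calc ∫ x in ball z (r/2), ‖gradient v x‖ ^ 2 / v x ^ 2
      = ∫ x in ball z (r/2), P x := hstep1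
    _ ≤ ∫ x, P x := hstep2
    _ ≤ 4 * ∫ x, G x := key
    _ ≤ 4 * ((N * (K * r⁻¹) ^ 2) * (volume (closedBall z r)).toReal) := by
        have := hGbound
        linarith
    _ = 4 * ((N * (K * r⁻¹) ^ 2) * (r ^ N * B₁)) := by rw [hvol]
    _ ≤ (4 * N * K ^ 2 * B₁ + 1) * r ^ ((N:ℝ) - 2) := hfinal
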